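/- Under Assumptions (A1)-(A4), for every y < γ_C, every v in the support interval 𝒫 of the propensity score, and every δ > 0 such that y+δ lies in the support of C, the conditional joint probability of the observed outcome and non-treatment satisfies ℙ[Y ≤ y, D = 0 | P(Z,C) = v, C = y+δ] = ∫_v^1 ℙ[Y*(0) ≤ y | C = y+δ, V = u] du (for almost every such conditioning value with respect to the distribution of (P(Z,C), C)). -/

import Mathlib

open MeasureTheory ProbabilityTheory Set
open scoped ENNReal

noncomputable section

section Helpers
lemma map_eq_compProd_condDistrib {Ω β E : Type*} {mΩ : MeasurableSpace Ω}
    {mβ : MeasurableSpace β} [MeasurableSpace E] [StandardBorelSpace E] [Nonempty E]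
    (μ : Measure Ω) [IsFiniteMeasure μ] {X : Ω → β} {Y : Ω → E}
    (hX : Measurable X) (hY : Measurable Y) :
    μ.map (fun ω => (X ω, Y ω)) = (μ.map X) ⊗ₘ condDistrib Y X μ := by
  rw [condDistrib, ← Measure.fst_map_prodMk (X := X) hY]
  exact (Measure.disintegrate _ _).symm

lemma measure_prod3_ext {α β γ : Type*} [MeasurableSpace α] [MeasurableSpace β]
    [MeasurableSpace γ] {μ ν : Measure (α × β × γ)} [IsFiniteMeasure μ] [IsFiniteMeasure ν]
    (h : ∀ A B₁ B₂, MeasurableSet A → MeasurableSet B₁ → MeasurableSet B₂ →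
      μ (A ×ˢ B₁ ×ˢ B₂) = ν (A ×ˢ B₁ ×ˢ B₂)) : μ = ν := by
  have hgen : MeasurableSpace.generateFrom (image2 (· ×ˢ ·) {s : Set α | MeasurableSet s}
      (image2 (· ×ˢ ·) {s : Set β | MeasurableSet s} {s : Set γ | MeasurableSet s}))
      = Prod.instMeasurableSpace :=
    generateFrom_eq_prod MeasurableSpace.generateFrom_measurableSet generateFrom_prod
      isCountablySpanning_measurableSet
      (isCountablySpanning_measurableSet.prod isCountablySpanning_measurableSet)
  refine MeasureTheory.ext_of_generate_finite _ hgen.symm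
    (IsPiSystem.prod MeasurableSpace.isPiSystem_measurableSet
      (IsPiSystem.prod MeasurableSpace.isPiSystem_measurableSet MeasurableSpace.isPiSystem_measurableSet))
    ?_ ?_
  · rintro _ ⟨A, hA, _, ⟨B₁, hB₁, B₂, hB₂, rfl⟩, rfl⟩
    exact h A B₁ B₂ hA hB₁ hB₂
  · have := h univ univ univ .univ .univ .univ
    simpa using this

lemma measure_ext_of_Iic_rat {μ ν : Measure ℝ} [IsFiniteMeasure μ] [IsFiniteMeasure ν]
    (h : ∀ q : ℚ, μ (Iic (q : ℝ)) = ν (Iic (q : ℝ))) : μ = ν := by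
  refine Measure.ext_of_Iic μ ν (fun a => ?_)
  have hne : Nonempty {q : ℚ // a < (q : ℝ)} := by
    obtain ⟨q, hq⟩ := exists_rat_gt a
    exact ⟨⟨q, hq⟩⟩
  have hIic : Iic a = ⋂ q : {q : ℚ // a < (q : ℝ)}, Iic ((q : ℚ) : ℝ) := by
    ext x
    simp only [mem_Iic, mem_iInter]
    constructor
    · intro hx q
      exact hx.trans q.2.le
    · intro hx
      by_contra hax
      push_neg at hax
      obtain ⟨q, hq1, hq2⟩ := exists_rat_btwn hax
      exact absurd (hx ⟨q, hq1⟩) (not_le.mpr hq2)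
  have hdir : Directed (· ⊇ ·) (fun q : {q : ℚ // a < (q : ℝ)} => Iic ((q : ℚ) : ℝ)) := by
    intro q r
    refine ⟨⟨min q.1 r.1, ?_⟩, ?_, ?_⟩
    · push_cast
      exact lt_min q.2 r.2
    · simp only [Iic_subset_Iic]
      push_cast
      exact min_le_left _ _
    · simp only [Iic_subset_Iic]
      push_cast
      exact min_le_right _ _
  rw [hIic, Directed.measure_iInter (fun q => measurableSet_Iic.nullMeasurableSet) hdir
      ⟨hne.some, measure_ne_top μ _⟩,
    Directed.measure_iInter (fun q => measurableSet_Iic.nullMeasurableSet) hdir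
      ⟨hne.some, measure_ne_top ν _⟩]
  exact iInf_congr fun q => h q.1
lemma condIndepFun_prodMk_left {Ω E : Type*} {mΩ : MeasurableSpace Ω} [StandardBorelSpace Ω]
    [Nonempty Ω] (μ : Measure Ω) [IsProbabilityMeasure μ]
    {Z C : Ω → ℝ} [MeasurableSpace E] {G : Ω → E}
    (hZ : Measurable Z) (hC : Measurable C) (hG : Measurable G)
    (h : CondIndepFun (MeasurableSpace.comap C inferInstance) hC.comap_le Z G μ) :
    CondIndepFun (MeasurableSpace.comap C inferInstance) hC.comap_le
      (fun ω => (Z ω, C ω)) G μ := by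
  have hmul := (condIndepFun_iff_condExp_inter_preimage_eq_mul
    (m' := MeasurableSpace.comap C inferInstance) (hm' := hC.comap_le) hZ hG).mp h
  -- pull-out lemma
  have pull : ∀ (W : Set Ω), MeasurableSet[mΩ] W → ∀ (s₂ : Set ℝ), MeasurableSet s₂ →
      (μ⟦W ∩ C ⁻¹' s₂ | MeasurableSpace.comap C inferInstance⟧) =ᵐ[μ] (C ⁻¹' s₂).indicator (μ⟦W | MeasurableSpace.comap C inferInstance⟧) := by
    intro W hW s₂ hs₂
    have hmeasB : MeasurableSet[MeasurableSpace.comap C inferInstance] (C ⁻¹' s₂) := ⟨s₂, hs₂, rfl⟩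
    have hind : (W ∩ C ⁻¹' s₂).indicator (fun _ => (1:ℝ))
        = (C ⁻¹' s₂).indicator (W.indicator (fun _ => (1:ℝ))) := by
      rw [Set.indicator_indicator, inter_comm]
    calc μ⟦W ∩ C ⁻¹' s₂ | MeasurableSpace.comap C inferInstance⟧
        = μ[(C ⁻¹' s₂).indicator (W.indicator (fun _ => (1:ℝ))) | MeasurableSpace.comap C inferInstance] := by rw [← hind]
      _ =ᵐ[μ] (C ⁻¹' s₂).indicator (μ⟦W | MeasurableSpace.comap C inferInstance⟧) :=
          condExp_indicator ((integrable_const (1:ℝ)).indicator hW) hmeasB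
  rw [condIndepFun_iff_condIndep]
  have hgen1 : MeasurableSpace.comap (fun ω => (Z ω, C ω)) inferInstance
      = MeasurableSpace.generateFrom
        {s | ∃ t ∈ image2 (· ×ˢ ·) {s : Set ℝ | MeasurableSet s} {s : Set ℝ | MeasurableSet s},
          (fun ω => (Z ω, C ω)) ⁻¹' t = s} := by
    conv_lhs => rw [← generateFrom_prod]
    rw [MeasurableSpace.comap_generateFrom]
    rfl
  have hgen2 : MeasurableSpace.comap G inferInstance
      = MeasurableSpace.generateFrom
          {s | MeasurableSet[MeasurableSpace.comap G inferInstance] s} :=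
    (@MeasurableSpace.generateFrom_measurableSet Ω (MeasurableSpace.comap G inferInstance)).symm
  refine CondIndepSets.condIndep (hZ.prodMk hC).comap_le hG.comap_le ?_ ?_ hgen1 hgen2 ?_
  · exact (IsPiSystem.prod MeasurableSpace.isPiSystem_measurableSet
      MeasurableSpace.isPiSystem_measurableSet).comap _
  · exact @MeasurableSpace.isPiSystem_measurableSet Ω (MeasurableSpace.comap G inferInstance)
  · rw [condIndepSets_iff]
    rotate_left
    · rintro s ⟨t, ⟨s₁, hs₁, s₂, hs₂, rfl⟩, rfl⟩
      have hs₁' : MeasurableSet s₁ := hs₁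
      have hs₂' : MeasurableSet s₂ := hs₂
      exact (hZ.prodMk hC) (hs₁'.prod hs₂')
    · rintro s hs
      exact hG.comap_le _ hs
    rintro _ t2 ⟨_, ⟨s₁, hs₁, s₂, hs₂, rfl⟩, rfl⟩ ⟨t, ht, rfl⟩
    have hset : (fun ω => (Z ω, C ω)) ⁻¹' (s₁ ×ˢ s₂) = Z ⁻¹' s₁ ∩ C ⁻¹' s₂ :=
      Set.mk_preimage_prod _ _
    rw [hset]
    have h1 : (Z ⁻¹' s₁ ∩ C ⁻¹' s₂) ∩ G ⁻¹' t = (Z ⁻¹' s₁ ∩ G ⁻¹' t) ∩ C ⁻¹' s₂ := by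
      ext ω; simp only [mem_inter_iff, mem_preimage]; tauto
    rw [h1]
    filter_upwards [pull (Z ⁻¹' s₁ ∩ G ⁻¹' t) ((hZ hs₁).inter (hG ht)) s₂ hs₂,
      pull (Z ⁻¹' s₁) (hZ hs₁) s₂ hs₂, hmul s₁ t hs₁ ht] with ω hA hB hZG
    rw [hA, Pi.mul_apply, hB]
    by_cases hω : ω ∈ C ⁻¹' s₂
    · rw [Set.indicator_of_mem hω, Set.indicator_of_mem hω, hZG]
    · rw [Set.indicator_of_notMem hω, Set.indicator_of_notMem hω, zero_mul]
lemma lintegral_condDistrib_mul_of_condIndepFun {Ω E F : Type*} {mΩ : MeasurableSpace Ω}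
    [StandardBorelSpace Ω] [Nonempty Ω]
    [MeasurableSpace E] [StandardBorelSpace E] [Nonempty E]
    [MeasurableSpace F] [StandardBorelSpace F] [Nonempty F]
    (μ : Measure Ω) [IsProbabilityMeasure μ] {C : Ω → ℝ} {U : Ω → E} {W : Ω → F}
    (hC : Measurable C) (hU : Measurable U) (hW : Measurable W)
    (hCI : CondIndepFun (MeasurableSpace.comap C inferInstance) hC.comap_le U W μ)
    {A : Set ℝ} {B₁ : Set E} {B₂ : Set F} (hA : MeasurableSet A) (hB₁ : MeasurableSet B₁)
    (hB₂ : MeasurableSet B₂) :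
    ∫⁻ c in A, condDistrib U C μ c B₁ * condDistrib W C μ c B₂ ∂(μ.map C)
      = μ (C ⁻¹' A ∩ (U ⁻¹' B₁ ∩ W ⁻¹' B₂)) := by
  have hmul := (condIndepFun_iff_condExp_inter_preimage_eq_mul
    (m' := MeasurableSpace.comap C inferInstance) (hm' := hC.comap_le) hU hW).mp hCI B₁ B₂ hB₁ hB₂
  have hcd1 := condDistrib_ae_eq_condExp (μ := μ) hC hU hB₁
  have hcd2 := condDistrib_ae_eq_condExp (μ := μ) hC hW hB₂
  -- the εNNReal integrand as a function of ω
  set Fn : Ω → ℝ≥0∞ := fun ω => condDistrib U C μ (C ω) B₁ * condDistrib W C μ (C ω) B₂ with hFn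
  have hFnmeas : Measurable Fn :=
    (((Kernel.measurable_coe _ hB₁).comp hC)).mul ((Kernel.measurable_coe _ hB₂).comp hC)
  -- step 1: the lintegral over μ.map C equals lintegral over μ of Fn
  have step1 : ∫⁻ c in A, condDistrib U C μ c B₁ * condDistrib W C μ c B₂ ∂(μ.map C)
      = ∫⁻ ω in C ⁻¹' A, Fn ω ∂μ := by
    rw [setLIntegral_map (f := fun c => condDistrib U C μ c B₁ * condDistrib W C μ c B₂) hA
      (by have := ((Kernel.measurable_coe (condDistrib U C μ) hB₁).mul
        (Kernel.measurable_coe (condDistrib W C μ) hB₂)); exact this) hC]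
  -- step 2: real-valued computation
  have hInt : Integrable ((U ⁻¹' B₁ ∩ W ⁻¹' B₂).indicator (fun _ => (1:ℝ))) μ :=
    (integrable_const (1:ℝ)).indicator ((hU hB₁).inter (hW hB₂))
  have hCA : MeasurableSet[MeasurableSpace.comap C inferInstance] (C ⁻¹' A) := ⟨A, hA, rfl⟩
  have h1 : ∫ ω in C ⁻¹' A, (μ⟦U ⁻¹' B₁ ∩ W ⁻¹' B₂ | MeasurableSpace.comap C inferInstance⟧) ω ∂μ
      = (μ (C ⁻¹' A ∩ (U ⁻¹' B₁ ∩ W ⁻¹' B₂))).toReal := by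
    rw [setIntegral_condExp hC.comap_le hInt hCA, setIntegral_indicator ((hU hB₁).inter (hW hB₂))]
    simp [Measure.restrict_apply ((hU hB₁).inter (hW hB₂)), inter_comm, Measure.real]
  have h2 : (μ⟦U ⁻¹' B₁ ∩ W ⁻¹' B₂ | MeasurableSpace.comap C inferInstance⟧)
      =ᵐ[μ] fun ω => (Fn ω).toReal := by
    filter_upwards [hmul, hcd1, hcd2] with ω h hu hw
    rw [h, ← hu, ← hw, hFn]
    simp [ENNReal.toReal_mul, Measure.real]
  have h3 : ∫ ω in C ⁻¹' A, (μ⟦U ⁻¹' B₁ ∩ W ⁻¹' B₂ | MeasurableSpace.comap C inferInstance⟧) ω ∂μ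
      = ∫ ω in C ⁻¹' A, (Fn ω).toReal ∂μ :=
    integral_congr_ae (ae_restrict_of_ae h2)
  have h4 : ∫ ω in C ⁻¹' A, (Fn ω).toReal ∂μ = (∫⁻ ω in C ⁻¹' A, Fn ω ∂μ).toReal := by
    refine integral_toReal (hFnmeas.aemeasurable.restrict) ?_
    filter_upwards with ω
    exact ENNReal.mul_lt_top (measure_lt_top _ _) (measure_lt_top _ _)
  have hFnle : ∀ ω, Fn ω ≤ 1 := fun ω => by
    calc Fn ω ≤ 1 * 1 := mul_le_mul' prob_le_one prob_le_one
    _ = 1 := one_mul 1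
  have hfin : ∫⁻ ω in C ⁻¹' A, Fn ω ∂μ ≠ ⊤ := by
    refine ne_top_of_le_ne_top (measure_ne_top μ (C ⁻¹' A)) ?_
    calc ∫⁻ ω in C ⁻¹' A, Fn ω ∂μ ≤ ∫⁻ _ in C ⁻¹' A, 1 ∂μ := lintegral_mono hFnle
    _ = μ (C ⁻¹' A) := setLIntegral_one _
  rw [step1]
  have hkey : (μ (C ⁻¹' A ∩ (U ⁻¹' B₁ ∩ W ⁻¹' B₂))).toReal
      = (∫⁻ ω in C ⁻¹' A, Fn ω ∂μ).toReal := h1.symm.trans (h3.trans h4)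
  exact (ENNReal.toReal_eq_toReal_iff' hfin (measure_ne_top μ _)).mp hkey.symm
lemma condDistrib_prod_of_condIndepFun {Ω E F : Type*} {mΩ : MeasurableSpace Ω}
    [StandardBorelSpace Ω] [Nonempty Ω]
    [MeasurableSpace E] [StandardBorelSpace E] [Nonempty E]
    [MeasurableSpace F] [StandardBorelSpace F] [Nonempty F]
    (μ : Measure Ω) [IsProbabilityMeasure μ] {C : Ω → ℝ} {U : Ω → E} {W : Ω → F}
    (hC : Measurable C) (hU : Measurable U) (hW : Measurable W)
    (hCI : CondIndepFun (MeasurableSpace.comap C inferInstance) hC.comap_le U W μ) :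
    ∀ᵐ c ∂(μ.map C), condDistrib (fun ω => (U ω, W ω)) C μ c
      = (condDistrib U C μ c).prod (condDistrib W C μ c) := by
  have hκ : μ.map (fun ω => (C ω, (U ω, W ω)))
      = (μ.map C) ⊗ₘ (condDistrib U C μ ×ₖ condDistrib W C μ) := by
    haveI : IsProbabilityMeasure (μ.map (fun ω => (C ω, (U ω, W ω)))) :=
      Measure.isProbabilityMeasure_map (hC.prodMk (hU.prodMk hW)).aemeasurable
    haveI : IsProbabilityMeasure (μ.map C) := Measure.isProbabilityMeasure_map hC.aemeasurable
    refine measure_prod3_ext (fun A B₁ B₂ hA hB₁ hB₂ => ?_)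
    rw [Measure.map_apply (hC.prodMk (hU.prodMk hW)) (hA.prod (hB₁.prod hB₂))]
    rw [Measure.compProd_apply_prod hA (hB₁.prod hB₂)]
    have hpre : (fun ω => (C ω, (U ω, W ω))) ⁻¹' (A ×ˢ B₁ ×ˢ B₂)
        = C ⁻¹' A ∩ (U ⁻¹' B₁ ∩ W ⁻¹' B₂) := by
      ext ω
      simp [Set.mem_prod]
    rw [hpre, ← lintegral_condDistrib_mul_of_condIndepFun μ hC hU hW hCI hA hB₁ hB₂]
    refine setLIntegral_congr_fun hA (fun c _ => ?_)
    rw [Kernel.prod_apply, Measure.prod_prod]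
  have h := condDistrib_ae_eq_of_measure_eq_compProd C (hU.prodMk hW).aemeasurable hκ
  filter_upwards [h] with c hc
  rw [hc, Kernel.prod_apply]
lemma condDistrib_prod_fiber {Ω : Type*} {mΩ : MeasurableSpace Ω} [StandardBorelSpace Ω]
    [Nonempty Ω] (μ : Measure Ω) [IsProbabilityMeasure μ] {C V Y0 : Ω → ℝ}
    (hC : Measurable C) (hV : Measurable V) (hY0 : Measurable Y0) (y : ℝ) :
    ∀ᵐ c ∂(μ.map C),
      ((condDistrib (fun ω => (V ω, Y0 ω)) C μ c).restrict (univ ×ˢ Iic y)).fst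
        = (condDistrib V C μ c).withDensity
            (fun u => condDistrib Y0 (fun ω => (C ω, V ω)) μ (c, u) (Iic y)) := by
  set η := condDistrib (fun ω => (V ω, Y0 ω)) C μ with hη
  set lamK := condDistrib V C μ with hlam
  set θ := condDistrib Y0 (fun ω => (C ω, V ω)) μ with hθ
  have hθm : Measurable (fun q : ℝ × ℝ => θ q (Iic y)) :=
    Kernel.measurable_coe _ measurableSet_Iic
  -- pointwise identification of the two measures applied to a set A
  have hfstA : ∀ c (A : Set ℝ), MeasurableSet A →
      ((η c).restrict (univ ×ˢ Iic y)).fst A = η c (A ×ˢ Iic y) := by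
    intro c A hA
    rw [Measure.fst_apply hA, Measure.restrict_apply (measurable_fst hA)]
    congr 1
    ext p
    simp [mem_prod, and_comm]
  have hwdA : ∀ c (A : Set ℝ), MeasurableSet A →
      ((lamK c).withDensity (fun u => θ (c, u) (Iic y))) A
        = ∫⁻ u in A, θ (c, u) (Iic y) ∂(lamK c) := by
    intro c A hA
    rw [withDensity_apply _ hA]
  -- the a.e. equality for a fixed measurable A
  have key : ∀ (A : Set ℝ), MeasurableSet A → ∀ᵐ c ∂(μ.map C),
      η c (A ×ˢ Iic y) = ∫⁻ u in A, θ (c, u) (Iic y) ∂(lamK c) := by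
    intro A hA
    have hAy : MeasurableSet (A ×ˢ Iic y) := hA.prod measurableSet_Iic
    set F : ℝ × ℝ → ℝ≥0∞ := fun p => ((univ : Set ℝ) ×ˢ A).indicator
      (fun q => θ q (Iic y)) p with hF
    have hFm : Measurable F := hθm.indicator (MeasurableSet.univ.prod hA)
    have hgm : Measurable (fun c => ∫⁻ u, F (c, u) ∂(lamK c)) :=
      Measurable.lintegral_kernel_prod_right' (κ := lamK) hFm
    have hg_eq : ∀ c, ∫⁻ u in A, θ (c, u) (Iic y) ∂(lamK c) = ∫⁻ u, F (c, u) ∂(lamK c) := by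
      intro c
      rw [hF, ← lintegral_indicator hA]
      congr 1
      ext u
      by_cases hu : u ∈ A <;> simp [hu]
    have heq : ∀ (s : Set ℝ), MeasurableSet s →
        ∫⁻ c in s, η c (A ×ˢ Iic y) ∂(μ.map C) = ∫⁻ c in s, ∫⁻ u, F (c, u) ∂(lamK c) ∂(μ.map C) := by
      intro s hs
      have lhs_eq : ∫⁻ c in s, η c (A ×ˢ Iic y) ∂(μ.map C)
          = μ (C ⁻¹' s ∩ (fun ω => (V ω, Y0 ω)) ⁻¹' (A ×ˢ Iic y)) := by
        rw [setLIntegral_map hs (Kernel.measurable_coe _ hAy) hC]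
        exact setLIntegral_preimage_condDistrib hC (hV.prodMk hY0).aemeasurable hAy hs
      have rhs_eq : ∫⁻ c in s, ∫⁻ u, F (c, u) ∂(lamK c) ∂(μ.map C)
          = μ ((fun ω => (C ω, V ω)) ⁻¹' (s ×ˢ A) ∩ Y0 ⁻¹' (Iic y)) := by
        have h1 : ∫⁻ c in s, ∫⁻ u, F (c, u) ∂(lamK c) ∂(μ.map C)
            = ∫⁻ p in s ×ˢ (univ : Set ℝ), F p ∂((μ.map C) ⊗ₘ lamK) := by
          rw [Measure.setLIntegral_compProd hFm hs MeasurableSet.univ]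
          simp [Measure.restrict_univ]
        rw [h1, ← map_eq_compProd_condDistrib μ hC hV]
        have h2 : ∫⁻ p in s ×ˢ (univ : Set ℝ), F p ∂(μ.map (fun ω => (C ω, V ω)))
            = ∫⁻ p in s ×ˢ A, θ p (Iic y) ∂(μ.map (fun ω => (C ω, V ω))) := by
          rw [hF, lintegral_indicator (MeasurableSet.univ.prod hA),
            Measure.restrict_restrict (MeasurableSet.univ.prod hA)]
          congr 1
          rw [prod_inter_prod]
          simp
        rw [h2, setLIntegral_map (hs.prod hA) hθm (hC.prodMk hV)]
        exact setLIntegral_preimage_condDistrib (hC.prodMk hV) hY0.aemeasurable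
          measurableSet_Iic (hs.prod hA)
      rw [lhs_eq, rhs_eq]
      congr 1
      ext ω
      simp only [mem_inter_iff, mem_preimage, mem_prod, mem_Iic]
      tauto
    have := ae_eq_of_forall_setLIntegral_eq_of_sigmaFinite
      (μ := μ.map C) (Kernel.measurable_coe _ hAy) hgm
      (fun s hs _ => heq s hs)
    filter_upwards [this] with c hc
    rw [hc, hg_eq]
  -- combine over rational A = Iic q
  have keyq : ∀ᵐ c ∂(μ.map C), ∀ q : ℚ,
      η c (Iic (q : ℝ) ×ˢ Iic y) = ∫⁻ u in Iic (q : ℝ), θ (c, u) (Iic y) ∂(lamK c) :=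
    ae_all_iff.mpr (fun q => key (Iic (q : ℝ)) measurableSet_Iic)
  filter_upwards [keyq] with c hc
  haveI : IsFiniteMeasure ((lamK c).withDensity (fun u => θ (c, u) (Iic y))) := by
    constructor
    rw [withDensity_apply _ MeasurableSet.univ, Measure.restrict_univ]
    calc ∫⁻ u, θ (c, u) (Iic y) ∂(lamK c) ≤ ∫⁻ _, 1 ∂(lamK c) :=
      lintegral_mono (fun u => prob_le_one)
    _ = 1 := by simp
    _ < ⊤ := ENNReal.one_lt_top
  refine measure_ext_of_Iic_rat (fun q => ?_)
  rw [hfstA c _ measurableSet_Iic, hwdA c _ measurableSet_Iic]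
  exact hc q

lemma measure_prod2_ext {α β : Type*} [MeasurableSpace α] [MeasurableSpace β]
    {μ ν : Measure (α × β)} [IsFiniteMeasure μ] [IsFiniteMeasure ν]
    (h : ∀ s t, MeasurableSet s → MeasurableSet t → μ (s ×ˢ t) = ν (s ×ˢ t)) : μ = ν := by
  refine MeasureTheory.ext_of_generate_finite _ generateFrom_prod.symm
    (IsPiSystem.prod MeasurableSpace.isPiSystem_measurableSet
      MeasurableSpace.isPiSystem_measurableSet) ?_ ?_
  · rintro _ ⟨s, hs, t, ht, rfl⟩
    exact h s t hs ht
  · have := h univ univ .univ .univ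
    simpa using this

end Helpers

/-- `γ_C := inf {c : ℙ[C ≤ c] = 1}`, the least upper bound of the support of the
censoring variable, as an extended nonnegative real. -/
def gammaSup {Ω : Type*} [MeasurableSpace Ω] (μ : Measure Ω) (C : Ω → ℝ) : ℝ≥0∞ :=
  sInf {c : ℝ≥0∞ | μ {ω | ENNReal.ofReal (C ω) ≤ c} = 1}

/-- Under Assumptions (A1)-(A4), for every `y < γ_C`, every `v` in the support interval `𝒫`
of the propensity score, and every censoring value `c = y + δ > y` in the support of `C`
(almost every conditioning value `(v, c)` w.r.t. the law of `(P(Z,C), C)`):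
`ℙ[Y ≤ y, D = 0 ∣ P(Z,C) = v, C = y + δ] = ∫_v^1 ℙ[Y*(0) ≤ y ∣ C = y + δ, V = u] du`. -/
theorem dmtr_integral_rep_untreated
    {Ω : Type*} [MeasurableSpace Ω] [StandardBorelSpace Ω] [Nonempty Ω]
    (μ : Measure Ω) [IsProbabilityMeasure μ]
    -- the random variables of the model
    (Y0 Y1 V Z C : Ω → ℝ) (P : ℝ × ℝ → ℝ)
    (hY0 : Measurable Y0) (hY1 : Measurable Y1) (hV : Measurable V)
    (hZ : Measurable Z) (hC : Measurable C) (hP : Measurable P)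
    (hY0nn : ∀ ω, 0 ≤ Y0 ω) (hY1nn : ∀ ω, 0 ≤ Y1 ω) (hCnn : ∀ ω, 0 ≤ C ω)
    (hVrange : ∀ ω, V ω ∈ Set.Ioo (0 : ℝ) 1)
    (hPrange : ∀ p, P p ∈ Set.Icc (0 : ℝ) 1)
    -- the treatment indicator, realized outcome, observed (censored) outcome and
    -- propensity score random variable
    (D : Ω → ℝ) (hD : D = fun ω => if V ω ≤ P (Z ω, C ω) then 1 else 0)
    (Y : Ω → ℝ) (hY : Y = fun ω => min (D ω * Y1 ω + (1 - D ω) * Y0 ω) (C ω))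
    (PS : Ω → ℝ) (hPS : PS = fun ω => P (Z ω, C ω))
    -- (A1) random assignment: conditionally on `C`, `Z ⫫ (Y*(0), Y*(1), V)`
    (hA1 : CondIndepFun (MeasurableSpace.comap C inferInstance) hC.comap_le
      Z (fun ω => (Y0 ω, Y1 ω, V ω)) μ)
    -- (A2) rank: conditionally on `C = c`, the propensity score is absolutely continuous
    -- with support the (nontrivial) interval `𝒫 = [plow, phigh] ⊆ [0,1]`, not depending on `c`
    (plow phigh : ℝ) (h𝒫sub : Set.Icc plow phigh ⊆ Set.Icc (0 : ℝ) 1) (h𝒫lt : plow < phigh)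
    (hA2 : ∀ᵐ c ∂(μ.map C),
      condDistrib PS C μ c ≪ volume ∧
      condDistrib PS C μ c (Set.Icc plow phigh)ᶜ = 0 ∧
      ∀ a b : ℝ, plow ≤ a → a < b → b ≤ phigh → 0 < condDistrib PS C μ c (Set.Ioo a b))
    -- (A3) normalization: conditionally on `C`, `V` is uniform on `(0,1)`
    (hA3 : ∀ᵐ c ∂(μ.map C),
      condDistrib V C μ c = volume.restrict (Set.Ioo (0 : ℝ) 1))
    -- (A4) overlap: `ℙ[D = d ∣ C = c] ∈ (0,1)` for `d ∈ {0,1}`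
    (hA4 : ∀ᵐ c ∂(μ.map C),
      (0 < condDistrib D C μ c {(1 : ℝ)} ∧ condDistrib D C μ c {(1 : ℝ)} < 1) ∧
      (0 < condDistrib D C μ c {(0 : ℝ)} ∧ condDistrib D C μ c {(0 : ℝ)} < 1))
    -- the threshold `y < γ_C`
    (y : ℝ) (hy : ENNReal.ofReal y < gammaSup μ C) :
    ∀ᵐ p ∂(μ.map fun ω => (PS ω, C ω)),
      p.1 ∈ Set.Icc plow phigh → y < p.2 →
      condDistrib (fun ω => (Y ω, D ω)) (fun ω => (PS ω, C ω)) μ p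
          {q : ℝ × ℝ | q.1 ≤ y ∧ q.2 = 0}
        = ∫⁻ u in Set.Ioc p.1 (1 : ℝ),
            condDistrib Y0 (fun ω => (C ω, V ω)) μ (p.2, u) (Set.Iic y) := by
  
  -- basic measurability
  have hPSm : Measurable PS := by rw [hPS]; exact hP.comp (hZ.prodMk hC)
  have hDm : Measurable D := by
    rw [hD]
    exact Measurable.ite (measurableSet_le hV (hP.comp (hZ.prodMk hC))) measurable_const
      measurable_const
  have hYm : Measurable Y := by
    rw [hY]
    exact ((hDm.mul hY1).add ((measurable_const.sub hDm).mul hY0)).min hC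
  have hTm : Measurable (fun ω => (PS ω, C ω)) := hPSm.prodMk hC
  set θ := condDistrib Y0 (fun ω => (C ω, V ω)) μ with hθdef
  have hθm : Measurable (fun q : ℝ × ℝ => θ q (Iic y)) := Kernel.measurable_coe _ measurableSet_Iic
  set g : ℝ × ℝ → ℝ≥0∞ := fun p => ∫⁻ u in Ioc p.1 1, θ (p.2, u) (Iic y) with hgdef
  set ρ : Measure (ℝ × ℝ) := μ.map (fun ω => (PS ω, C ω)) with hρdef
  haveI : IsProbabilityMeasure ρ := Measure.isProbabilityMeasure_map hTm.aemeasurable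
  set S : Set (ℝ × ℝ) := {q : ℝ × ℝ | q.1 ≤ y ∧ q.2 = 0} with hSdef
  have hS : MeasurableSet S := (measurableSet_le measurable_fst measurable_const).inter
    (measurable_snd (measurableSet_singleton (0:ℝ)))
  set E : Set Ω := {ω | Y0 ω ≤ y ∧ PS ω < V ω} with hEdef
  have hE : MeasurableSet E := (measurableSet_le hY0 measurable_const).inter
    (measurableSet_lt hPSm hV)
  set R : Set (ℝ × ℝ) := (Icc plow phigh) ×ˢ (Ioi y) with hRdef
  have hR : MeasurableSet R := measurableSet_Icc.prod measurableSet_Ioi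
  have hplow0 : (0:ℝ) ≤ plow := (h𝒫sub (left_mem_Icc.mpr h𝒫lt.le)).1
  have hgm : Measurable g := by
    have hGm : Measurable (fun r : (ℝ × ℝ) × ℝ =>
        ({r : (ℝ × ℝ) × ℝ | r.1.1 < r.2 ∧ r.2 ≤ 1}).indicator
          (fun r => θ (r.1.2, r.2) (Iic y)) r) := by
      refine Measurable.indicator ?_ ?_
      · exact hθm.comp ((measurable_fst.snd).prodMk measurable_snd)
      · exact (measurableSet_lt (measurable_fst.fst) measurable_snd).inter
          (measurableSet_le measurable_snd measurable_const)
    have hgeq : g = fun p => ∫⁻ u, ({r : (ℝ × ℝ) × ℝ | r.1.1 < r.2 ∧ r.2 ≤ 1}).indicator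
        (fun r => θ (r.1.2, r.2) (Iic y)) (p, u) := by
      funext p
      rw [hgdef]
      simp only
      rw [← lintegral_indicator measurableSet_Ioc]
      refine lintegral_congr fun u => ?_
      by_cases hu : u ∈ Ioc p.1 1
      · rw [indicator_of_mem hu, indicator_of_mem (show (p, u) ∈ _ from hu)]
      · rw [indicator_of_notMem hu, indicator_of_notMem (show (p, u) ∉ _ from hu)]
    rw [hgeq]
    exact hGm.lintegral_prod_right'
  set ν := condDistrib PS C μ with hνdef
  set η := condDistrib (fun ω => (V ω, Y0 ω)) C μ with hηdef
  set lamK := condDistrib V C μ with hlamdef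
  set ξ := condDistrib (fun ω => (PS ω, (V ω, Y0 ω))) C μ with hξdef
  set νC := μ.map C with hνCdef
  have hCI : CondIndepFun (MeasurableSpace.comap C inferInstance) hC.comap_le PS
      (fun ω => (V ω, Y0 ω)) μ := by
    have hA1' := condIndepFun_prodMk_left μ hZ hC (hY0.prodMk (hY1.prodMk hV)) hA1
    have hψ : Measurable (fun q : ℝ × ℝ × ℝ => (q.2.2, q.1)) :=
      (measurable_snd.snd).prodMk measurable_fst
    have h := hA1'.comp hP hψ
    rw [hPS]
    exact h
  have hfact : ∀ᵐ c ∂νC, ξ c = (ν c).prod (η c) :=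
    condDistrib_prod_of_condIndepFun μ hC hPSm (hV.prodMk hY0) hCI
  have hfib := condDistrib_prod_fiber μ hC hV hY0 y
  have hIccPS : μ (PS ⁻¹' (Icc plow phigh)ᶜ) = 0 := by
    have h0 : μ (C ⁻¹' univ ∩ PS ⁻¹' (Icc plow phigh)ᶜ)
        = ∫⁻ ω in C ⁻¹' univ, ν (C ω) (Icc plow phigh)ᶜ ∂μ :=
      (setLIntegral_preimage_condDistrib hC hPSm.aemeasurable
        measurableSet_Icc.compl MeasurableSet.univ).symm
    simp only [preimage_univ, univ_inter, Measure.restrict_univ] at h0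
    have h1 : ∫⁻ c, ν c (Icc plow phigh)ᶜ ∂νC = ∫⁻ ω, ν (C ω) (Icc plow phigh)ᶜ ∂μ := by
      rw [hνCdef]
      exact lintegral_map (Kernel.measurable_coe _ measurableSet_Icc.compl) hC
    rw [h0, ← h1]
    calc ∫⁻ c, ν c (Icc plow phigh)ᶜ ∂νC = ∫⁻ _, 0 ∂νC :=
      lintegral_congr_ae (hA2.mono fun c hc => hc.2.1)
    _ = 0 := lintegral_zero
  have hImem : ∀ᵐ p ∂ρ, p.1 ∈ Icc plow phigh := by
    rw [ae_iff]
    have hss : {p : ℝ × ℝ | ¬ p.1 ∈ Icc plow phigh} = (Icc plow phigh)ᶜ ×ˢ (univ : Set ℝ) := by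
      ext p; simp [mem_prod]
    rw [hss, hρdef, Measure.map_apply hTm (measurableSet_Icc.compl.prod MeasurableSet.univ)]
    have hpre : (fun ω => (PS ω, C ω)) ⁻¹' ((Icc plow phigh)ᶜ ×ˢ univ)
        = PS ⁻¹' (Icc plow phigh)ᶜ := by
      ext ω; simp
    rw [hpre]
    exact hIccPS
  have hg1 : ∀ᵐ p ∂ρ, g p ≤ 1 := by
    filter_upwards [hImem] with p hp
    have : g p = ∫⁻ u in Ioc p.1 1, θ (p.2, u) (Iic y) ∂volume := by rw [hgdef]
    rw [this]
    calc ∫⁻ u in Ioc p.1 1, θ (p.2, u) (Iic y) ∂volume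
        ≤ ∫⁻ _ in Ioc p.1 1, 1 ∂volume := lintegral_mono fun u => prob_le_one
    _ = volume (Ioc p.1 1) := setLIntegral_one _
    _ = ENNReal.ofReal (1 - p.1) := Real.volume_Ioc
    _ ≤ ENNReal.ofReal 1 := ENNReal.ofReal_le_ofReal (by linarith [hp.1, hplow0])
    _ = 1 := ENNReal.ofReal_one
  set μ₁ : Measure (ℝ × ℝ) := (μ.restrict E).map (fun ω => (PS ω, C ω)) with hμ₁def
  set gmin : ℝ × ℝ → ℝ≥0∞ := fun p => min (g p) 1 with hgmindef
  set μ₂ : Measure (ℝ × ℝ) := ρ.withDensity gmin with hμ₂def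
  have hgminm : Measurable gmin := hgm.min measurable_const
  haveI hfin1 : IsFiniteMeasure μ₁ := by
    constructor
    rw [hμ₁def, Measure.map_apply hTm MeasurableSet.univ]
    exact measure_lt_top _ _
  haveI hfin2 : IsFiniteMeasure μ₂ := by
    constructor
    rw [hμ₂def, withDensity_apply _ MeasurableSet.univ, Measure.restrict_univ]
    calc ∫⁻ p, gmin p ∂ρ ≤ ∫⁻ _, 1 ∂ρ := lintegral_mono fun p => min_le_right _ _
    _ = 1 := by simp
    _ < ⊤ := ENNReal.one_lt_top
  have hgmin_ae : ∀ᵐ p ∂ρ, gmin p = g p := by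
    filter_upwards [hg1] with p hp
    exact min_eq_left hp
  have hX3m : Measurable (fun ω => (PS ω, (V ω, Y0 ω))) := hPSm.prodMk (hV.prodMk hY0)
  have hmain : μ₁ = μ₂ := by
    refine measure_prod2_ext (fun t s ht hs => ?_)
    have hts : MeasurableSet (t ×ˢ s) := ht.prod hs
    have hR2 : μ₂ (t ×ˢ s) = ∫⁻ p in t ×ˢ s, g p ∂ρ := by
      rw [hμ₂def, withDensity_apply _ hts]
      exact lintegral_congr_ae (ae_restrict_of_ae hgmin_ae)
    have hL0 : μ₁ (t ×ˢ s) = μ (PS ⁻¹' t ∩ C ⁻¹' s ∩ E) := by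
      rw [hμ₁def, Measure.map_apply hTm hts, Measure.restrict_apply (hTm hts),
        mk_preimage_prod]
    rw [hR2, hL0]
    set St : Set (ℝ × ℝ × ℝ) := {r : ℝ × ℝ × ℝ | r.1 ∈ t ∧ r.1 < r.2.1 ∧ r.2.2 ≤ y} with hStdef
    have hSt : MeasurableSet St :=
      (measurable_fst ht).inter ((measurableSet_lt measurable_fst (measurable_snd.fst)).inter
        (measurableSet_le (measurable_snd.snd) measurable_const))
    -- Left side equals ∫⁻ c in s, ξ c St ∂νC
    have hLL : μ (PS ⁻¹' t ∩ C ⁻¹' s ∩ E) = ∫⁻ c in s, ξ c St ∂νC := by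
      have hset : C ⁻¹' s ∩ (fun ω => (PS ω, (V ω, Y0 ω))) ⁻¹' St
          = PS ⁻¹' t ∩ C ⁻¹' s ∩ E := by
        ext ω
        simp only [mem_inter_iff, mem_preimage, hStdef, mem_setOf_eq, hEdef]
        tauto
      rw [← hset, ← setLIntegral_preimage_condDistrib hC hX3m.aemeasurable hSt hs, hνCdef,
        setLIntegral_map hs (Kernel.measurable_coe _ hSt) hC]
    -- integrand identification, a.e. in c
    have haeint : ∀ᵐ c ∂νC, ξ c St = ∫⁻ v, t.indicator (fun v => g (v, c)) v ∂ν c := by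
      filter_upwards [hfact, hfib, hA2, hA3] with c hc hfb h2 h3
      rw [hc, Measure.prod_apply hSt]
      have hsect : ∀ v, η c (Prod.mk v ⁻¹' St)
          = t.indicator (fun v => η c (Ioi v ×ˢ Iic y)) v := by
        intro v
        by_cases hv : v ∈ t
        · rw [indicator_of_mem hv]
          congr 1
          ext q
          simp [hStdef, hv, mem_prod]
        · rw [indicator_of_notMem hv]
          have : Prod.mk v ⁻¹' St = ∅ := by
            ext q
            simp [hStdef, hv]
          rw [this, measure_empty]
      rw [lintegral_congr hsect]
      refine lintegral_congr_ae ?_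
      have hae_v : ∀ᵐ v ∂ν c, v ∈ Icc plow phigh := by
        rw [ae_iff]
        have : {v | ¬ v ∈ Icc plow phigh} = (Icc plow phigh)ᶜ := rfl
        rw [this]
        exact h2.2.1
      filter_upwards [hae_v] with v hv
      by_cases hvt : v ∈ t
      · rw [indicator_of_mem hvt, indicator_of_mem hvt]
        have h1 : η c (Ioi v ×ˢ Iic y) = ((η c).restrict (univ ×ˢ Iic y)).fst (Ioi v) := by
          rw [Measure.fst_apply measurableSet_Ioi,
            Measure.restrict_apply (measurable_fst measurableSet_Ioi)]
          congr 1
          ext q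
          simp [mem_prod, and_comm]
        rw [h1, hfb, withDensity_apply _ measurableSet_Ioi, h3,
          Measure.restrict_restrict measurableSet_Ioi]
        have hIoi : Ioi v ∩ Ioo (0:ℝ) 1 = Ioo v 1 := by
          ext u
          constructor
          · rintro ⟨h1', -, h2'⟩
            exact ⟨h1', h2'⟩
          · rintro ⟨h1', h2'⟩
            exact ⟨h1', lt_of_le_of_lt (hplow0.trans hv.1) h1', h2'⟩
        rw [hIoi]
        have : g (v, c) = ∫⁻ u in Ioc v 1, θ (c, u) (Iic y) ∂volume := by rw [hgdef]
        rw [this]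
        exact setLIntegral_congr Ioo_ae_eq_Ioc
      · rw [indicator_of_notMem hvt, indicator_of_notMem hvt]
    -- Right side equals the same double integral
    have hRR : ∫⁻ p in t ×ˢ s, g p ∂ρ
        = ∫⁻ c in s, ∫⁻ v, t.indicator (fun v => g (v, c)) v ∂ν c ∂νC := by
      have hswap : ρ = (μ.map (fun ω => (C ω, PS ω))).map Prod.swap := by
        rw [hρdef, Measure.map_map measurable_swap (hC.prodMk hPSm)]
        rfl
      have hcp : μ.map (fun ω => (C ω, PS ω)) = νC ⊗ₘ ν := by
        rw [hνCdef, hνdef]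
        exact map_eq_compProd_condDistrib μ hC hPSm
      have hF2m : Measurable (fun q : ℝ × ℝ => (s ×ˢ t).indicator (fun q => g (q.2, q.1)) q) :=
        (hgm.comp (measurable_snd.prodMk measurable_fst)).indicator (hs.prod ht)
      calc ∫⁻ p in t ×ˢ s, g p ∂ρ
          = ∫⁻ p, (t ×ˢ s).indicator g p ∂ρ := (lintegral_indicator hts g).symm
        _ = ∫⁻ q, (t ×ˢ s).indicator g (Prod.swap q) ∂(μ.map (fun ω => (C ω, PS ω))) := by
            rw [hswap, lintegral_map (hgm.indicator hts) measurable_swap]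
        _ = ∫⁻ q, (s ×ˢ t).indicator (fun q => g (q.2, q.1)) q ∂(νC ⊗ₘ ν) := by
            rw [hcp]
            refine lintegral_congr fun q => ?_
            by_cases hq : q ∈ s ×ˢ t
            · rw [indicator_of_mem hq, indicator_of_mem (show Prod.swap q ∈ t ×ˢ s from
                ⟨hq.2, hq.1⟩)]
              rfl
            · rw [indicator_of_notMem hq, indicator_of_notMem (show Prod.swap q ∉ t ×ˢ s from
                fun hmem => hq ⟨hmem.2, hmem.1⟩)]
        _ = ∫⁻ c, ∫⁻ v, (s ×ˢ t).indicator (fun q => g (q.2, q.1)) (c, v) ∂ν c ∂νC :=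
            Measure.lintegral_compProd hF2m
        _ = ∫⁻ c, s.indicator (fun c => ∫⁻ v, t.indicator (fun v => g (v, c)) v ∂ν c) c ∂νC := by
            refine lintegral_congr fun c => ?_
            by_cases hcs : c ∈ s
            · rw [indicator_of_mem hcs]
              refine lintegral_congr fun v => ?_
              by_cases hvt : v ∈ t
              · rw [indicator_of_mem (show (c, v) ∈ s ×ˢ t from ⟨hcs, hvt⟩),
                  indicator_of_mem hvt]
              · rw [indicator_of_notMem (show (c, v) ∉ s ×ˢ t from fun hmem => hvt hmem.2),
                  indicator_of_notMem hvt]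
            · rw [indicator_of_notMem hcs]
              have : ∀ v, (s ×ˢ t).indicator (fun q : ℝ × ℝ => g (q.2, q.1)) (c, v) = 0 :=
                fun v => indicator_of_notMem (fun hmem => hcs hmem.1) _
              simp [this]
        _ = ∫⁻ c in s, ∫⁻ v, t.indicator (fun v => g (v, c)) v ∂ν c ∂νC :=
            lintegral_indicator hs _
    rw [hLL, hRR]
    exact lintegral_congr_ae (ae_restrict_of_ae haeint)
  have hae : ∀ᵐ p ∂(ρ.restrict R),
      condDistrib (fun ω => (Y ω, D ω)) (fun ω => (PS ω, C ω)) μ p S = g p := by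
    refine ae_eq_of_forall_setLIntegral_eq_of_sigmaFinite (Kernel.measurable_coe _ hS) hgm ?_
    intro A hA _
    rw [Measure.restrict_restrict hA]
    have hAR : MeasurableSet (A ∩ R) := hA.inter hR
    have hL1 : ∫⁻ p in A ∩ R, condDistrib (fun ω => (Y ω, D ω)) (fun ω => (PS ω, C ω)) μ p S ∂ρ
        = μ ((fun ω => (PS ω, C ω)) ⁻¹' (A ∩ R) ∩ (fun ω => (Y ω, D ω)) ⁻¹' S) := by
      rw [hρdef, setLIntegral_map hAR (Kernel.measurable_coe _ hS) hTm]
      exact setLIntegral_preimage_condDistrib hTm (hYm.prodMk hDm).aemeasurable hS hAR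
    have hevent : (fun ω => (PS ω, C ω)) ⁻¹' (A ∩ R) ∩ (fun ω => (Y ω, D ω)) ⁻¹' S
        = (fun ω => (PS ω, C ω)) ⁻¹' (A ∩ R) ∩ E := by
      ext ω
      simp only [mem_inter_iff, mem_preimage, hSdef, mem_setOf_eq, hEdef]
      refine and_congr_right fun hmem => ?_
      have hyC : y < C ω := hmem.2.2
      have hDval : D ω = (if V ω ≤ PS ω then 1 else 0) := by rw [hD, hPS]
      have hYval : Y ω = min (D ω * Y1 ω + (1 - D ω) * Y0 ω) (C ω) := by rw [hY]
      by_cases hvp : V ω ≤ PS ω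
      · rw [hDval, if_pos hvp]
        constructor
        · rintro ⟨-, h10⟩
          exact absurd h10 one_ne_zero
        · rintro ⟨-, hlt⟩
          exact absurd hvp (not_le.mpr hlt)
      · have hD0 : D ω = 0 := by rw [hDval, if_neg hvp]
        have hY0eq : Y ω = min (Y0 ω) (C ω) := by rw [hYval, hD0]; norm_num
        rw [hD0, hY0eq]
        constructor
        · rintro ⟨hle, -⟩
          refine ⟨?_, not_le.mp hvp⟩
          rcases min_le_iff.mp hle with h | h
          · exact h
          · exact absurd h (not_le.mpr hyC)
        · rintro ⟨hle, -⟩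
          exact ⟨(min_le_left _ _).trans hle, rfl⟩
    have hL2 : μ ((fun ω => (PS ω, C ω)) ⁻¹' (A ∩ R) ∩ E) = μ₁ (A ∩ R) := by
      rw [hμ₁def, Measure.map_apply hTm hAR, Measure.restrict_apply (hTm hAR)]
    have hRend : μ₂ (A ∩ R) = ∫⁻ p in A ∩ R, g p ∂ρ := by
      rw [hμ₂def, withDensity_apply _ hAR]
      exact lintegral_congr_ae (ae_restrict_of_ae hgmin_ae)
    rw [hL1, hevent, hL2, hmain, hRend]
  rw [ae_restrict_iff' hR] at hae
  filter_upwards [hae] with p hp h1 h2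
  exact hp ⟨h1, h2⟩
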